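/- Let μ be a directed distance on a nonempty finite set S. There exists a map φ : T_μ → Q_μ^+ such that (1) φ(p) = p for all p ∈ Q_μ^+, and (2) D_∞(φ(C)) ≤ D_∞(C) for every cycle C in T_μ (φ is cyclically nonexpansive). -/

import Mathlib

open scoped BigOperators

/-- Points of `ℝ^{S^{cr}}`: pairs `p = (p^c, p^r)` of functions `S → ℝ`,
with the componentwise partial order (the product/pi order). -/
abbrev Pt (S : Type*) := (S → ℝ) × (S → ℝ)

/-- `μ` is a directed distance: nonnegative with zero diagonal. -/
def DirDist {S : Type*} (μ : S → S → ℝ) : Prop :=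
  (∀ s t, 0 ≤ μ s t) ∧ (∀ s, μ s s = 0)

/-- `d` is a directed metric: a directed distance satisfying the triangle inequality. -/
def DirMetric {V : Type*} (d : V → V → ℝ) : Prop :=
  DirDist d ∧ ∀ x y z, d x z ≤ d x y + d y z

/-- The polyhedron `Π_μ`. -/
def PiP {S : Type*} (μ : S → S → ℝ) : Set (Pt S) :=
  {p | ∀ s t, μ s t ≤ p.1 s + p.2 t}

/-- The polyhedron `P_μ = Π_μ ∩ ℝ_+^{S^{cr}}`. -/
def PP {S : Type*} (μ : S → S → ℝ) : Set (Pt S) :=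
  {p ∈ PiP μ | 0 ≤ p}

/-- The directed tight span `T_μ`: minimal elements of `P_μ`. -/
def TT {S : Type*} (μ : S → S → ℝ) : Set (Pt S) :=
  {p ∈ PP μ | ∀ q ∈ PP μ, q ≤ p → q = p}

/-- `Q_μ`: minimal elements of `Π_μ`. -/
def QQ {S : Type*} (μ : S → S → ℝ) : Set (Pt S) :=
  {p ∈ PiP μ | ∀ q ∈ PiP μ, q ≤ p → q = p}

/-- `Q_μ^+ = Q_μ ∩ ℝ_+^{S^{cr}}`. -/
def QP {S : Type*} (μ : S → S → ℝ) : Set (Pt S) :=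
  QQ μ ∩ {p | 0 ≤ p}

/-- `D_∞^+(f,g) = max_x (g(x) - f(x))_+`. -/
noncomputable def Dplus {X : Type*} [Fintype X] (f g : X → ℝ) : ℝ :=
  ⨆ x, max (g x - f x) 0

/-- `D_∞(p,q) = max ( D_∞^+(p^c,q^c), D_∞^+(q^r,p^r) )`. -/
noncomputable def Dinf {S : Type*} [Fintype S] (p q : Pt S) : ℝ :=
  max (Dplus p.1 q.1) (Dplus q.2 p.2)

/-- A subset `R` is balanced if no pair `p, q ∈ R` satisfies `p^c < q^c`,
and no pair satisfies `p^r < q^r`. -/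
def BalancedSet {S : Type*} (R : Set (Pt S)) : Prop :=
  (¬ ∃ p ∈ R, ∃ q ∈ R, ∀ s, p.1 s < q.1 s) ∧
  (¬ ∃ p ∈ R, ∃ q ∈ R, ∀ s, p.2 s < q.2 s)

/-- The vector `e = (1, -1)` spanning the linearity space of `Π_μ`. -/
def eVec (S : Type*) : Pt S := (fun _ => 1, fun _ => -1)

/-- `R ⊆ Q_μ` is a section: every point of `Q_μ` differs from exactly one point
of `R` by a multiple of `e`. -/
def IsSection {S : Type*} (μ : S → S → ℝ) (R : Set (Pt S)) : Prop :=
  R ⊆ QQ μ ∧ ∀ q ∈ QQ μ, ∃! p, p ∈ R ∧ ∃ α : ℝ, q - p = α • eVec S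

/-- The length of the cycle `(x 0, x 1, …, x m)` with respect to `d`. -/
def cycLen {V : Type*} (d : V → V → ℝ) (m : ℕ) (x : Fin (m + 1) → V) : ℝ :=
  ∑ i, d (x i) (x (i + 1))


set_option linter.unusedSectionVars false

section AuxStmt4

variable {S : Type*} [Fintype S] [Nonempty S]

private lemma le_csup' (f : S → ℝ) (i : S) : f i ≤ ⨆ j, f j :=
  le_ciSup (Set.Finite.bddAbove (Set.finite_range f)) i

private lemma cinf_le'' (f : S → ℝ) (i : S) : (⨅ j, f j) ≤ f i :=
  ciInf_le (Set.Finite.bddBelow (Set.finite_range f)) i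

private lemma dplus_nonneg' (f g : S → ℝ) : 0 ≤ Dplus f g := by
  obtain ⟨x⟩ := (inferInstance : Nonempty S)
  unfold Dplus
  exact le_trans (le_max_right (g x - f x) 0) (le_csup' (fun x => max (g x - f x) 0) x)

private lemma sub_le_dplus' (f g : S → ℝ) (x : S) : g x - f x ≤ Dplus f g := by
  unfold Dplus
  exact le_trans (le_max_left _ _) (le_csup' (fun x => max (g x - f x) 0) x)

private lemma dplus_le' {f g : S → ℝ} {d : ℝ} (h0 : 0 ≤ d) (h : ∀ x, g x - f x ≤ d) :
    Dplus f g ≤ d := by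
  unfold Dplus
  exact ciSup_le fun x => max_le (h x) h0

private lemma dinf_nonneg' (p q : Pt S) : 0 ≤ Dinf p q :=
  le_trans (dplus_nonneg' p.1 q.1) (le_max_left _ _)

private lemma dinf_le' {p q : Pt S} {d : ℝ} (h0 : 0 ≤ d)
    (hc : ∀ s, q.1 s - p.1 s ≤ d) (hr : ∀ s, p.2 s - q.2 s ≤ d) : Dinf p q ≤ d :=
  max_le (dplus_le' h0 hc) (dplus_le' h0 hr)

private lemma c_sub_le_dinf' (p q : Pt S) (s : S) : q.1 s - p.1 s ≤ Dinf p q :=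
  (sub_le_dplus' p.1 q.1 s).trans (le_max_left _ _)

private lemma r_sub_le_dinf' (p q : Pt S) (s : S) : p.2 s - q.2 s ≤ Dinf p q :=
  (sub_le_dplus' q.2 p.2 s).trans (le_max_right _ _)

/-- The conjugate `c* (t) = sup_s (μ s t - c s)`. -/
noncomputable def star1 (μ : S → S → ℝ) (c : S → ℝ) : S → ℝ := fun t => ⨆ s, (μ s t - c s)

/-- The conjugate `*r (s) = sup_t (μ s t - r t)`. -/
noncomputable def star2 (μ : S → S → ℝ) (r : S → ℝ) : S → ℝ := fun s => ⨆ t, (μ s t - r t)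

private lemma le_star1 (μ : S → S → ℝ) (c : S → ℝ) (s t : S) :
    μ s t - c s ≤ star1 μ c t := by
  unfold star1
  exact le_csup' (fun s => μ s t - c s) s

private lemma le_star2 (μ : S → S → ℝ) (r : S → ℝ) (s t : S) :
    μ s t - r t ≤ star2 μ r s := by
  unfold star2
  exact le_csup' (fun t => μ s t - r t) t

private lemma star1_le {μ : S → S → ℝ} {c r : S → ℝ}
    (h : ∀ s t, μ s t ≤ c s + r t) (t : S) : star1 μ c t ≤ r t := by
  unfold star1
  exact ciSup_le fun s => by linarith [h s t]

private lemma star2_le {μ : S → S → ℝ} {c r : S → ℝ}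
    (h : ∀ s t, μ s t ≤ c s + r t) (s : S) : star2 μ r s ≤ c s := by
  unfold star2
  exact ciSup_le fun t => by linarith [h s t]

private lemma star1_shift {μ : S → S → ℝ} {c1 c2 : S → ℝ} {d : ℝ}
    (h : ∀ s, c2 s ≤ c1 s + d) (t : S) : star1 μ c1 t ≤ star1 μ c2 t + d := by
  conv_lhs => unfold star1
  exact ciSup_le fun s => by linarith [le_star1 μ c2 s t, h s]

private lemma star2_shift {μ : S → S → ℝ} {r1 r2 : S → ℝ} {d : ℝ}
    (h : ∀ t, r2 t ≤ r1 t + d) (s : S) : star2 μ r1 s ≤ star2 μ r2 s + d := by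
  conv_lhs => unfold star2
  exact ciSup_le fun t => by linarith [le_star2 μ r2 s t, h t]

private lemma star121 (μ : S → S → ℝ) (c : S → ℝ) (t : S) :
    star1 μ (star2 μ (star1 μ c)) t = star1 μ c t := by
  apply le_antisymm
  · have h : ∀ s t, μ s t ≤ star2 μ (star1 μ c) s + star1 μ c t := fun s t => by
      linarith [le_star2 μ (star1 μ c) s t]
    exact star1_le h t
  · have h0 : ∀ s t, μ s t ≤ c s + star1 μ c t := fun s t => by
      linarith [le_star1 μ c s t]
    have h : ∀ s, star2 μ (star1 μ c) s ≤ c s + 0 := fun s => by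
      linarith [star2_le h0 s]
    linarith [star1_shift (μ := μ) h t]

/-- Retraction onto `Q_μ`. -/
noncomputable def phi0 (μ : S → S → ℝ) (p : Pt S) : Pt S :=
  (star2 μ (star1 μ p.1), star1 μ p.1)

private lemma phi0_mem_QQ (μ : S → S → ℝ) (p : Pt S) : phi0 μ p ∈ QQ μ := by
  constructor
  · intro s t
    have := le_star2 μ (star1 μ p.1) s t
    simp only [phi0]
    linarith
  · intro q hq hle
    obtain ⟨h1, h2⟩ := hle
    have hc : ∀ s, q.1 s = star2 μ (star1 μ p.1) s := by
      intro s
      refine le_antisymm (h1 s) (star2_le (fun s t => ?_) s)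
      have := hq s t
      have := h2 t
      simp only [phi0] at this ⊢
      linarith
    have hr : ∀ t, q.2 t = star1 μ p.1 t := by
      intro t
      refine le_antisymm (h2 t) ?_
      rw [← star121 μ p.1 t]
      refine star1_le (fun s t => ?_) t
      have := hq s t
      have := hc s
      linarith
    exact Prod.ext (funext hc) (funext hr)

private lemma phi0_id {μ : S → S → ℝ} {q : Pt S} (hq : q ∈ QQ μ) : phi0 μ q = q := by
  obtain ⟨hPi, hmin⟩ := hq
  have e1 : (q.1, star1 μ q.1) = q := by
    refine hmin _ (fun s t => by linarith [le_star1 μ q.1 s t]) ?_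
    exact ⟨le_refl _, star1_le hPi⟩
  have hr : star1 μ q.1 = q.2 := congrArg Prod.snd e1
  have e2 : (star2 μ q.2, q.2) = q := by
    refine hmin _ (fun s t => by linarith [le_star2 μ q.2 s t]) ?_
    exact ⟨star2_le hPi, le_refl _⟩
  have hc : star2 μ q.2 = q.1 := congrArg Prod.fst e2
  simp only [phi0, hr, hc]

/-- Shift along the lineality direction `e = (1, -1)`. -/
noncomputable def shiftE (α : ℝ) (p : Pt S) : Pt S :=
  (fun s => p.1 s + α, fun t => p.2 t - α)

private lemma QQ_shift {μ : S → S → ℝ} {q : Pt S} (α : ℝ) (hq : q ∈ QQ μ) :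
    shiftE α q ∈ QQ μ := by
  obtain ⟨hPi, hmin⟩ := hq
  constructor
  · intro s t; simp only [shiftE]; linarith [hPi s t]
  · intro q' hq' hle
    obtain ⟨h1, h2⟩ := hle
    have key : shiftE (-α) q' = q := by
      refine hmin _ (fun s t => by simp only [shiftE]; linarith [hq' s t]) ?_
      constructor
      · intro s; have := h1 s; simp only [shiftE] at this ⊢; linarith
      · intro t; have := h2 t; simp only [shiftE] at this ⊢; linarith
    have k1 := congrArg Prod.fst key
    have k2 := congrArg Prod.snd key
    simp only [shiftE] at k1 k2
    refine Prod.ext (funext fun s => ?_) (funext fun t => ?_)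
    · have := congrFun k1 s; simp only [shiftE]; linarith [this.ge, this.le]
    · have := congrFun k2 t; simp only [shiftE]; linarith [this.ge, this.le]

/-- Lower endpoint of admissible shifts. -/
noncomputable def Lq (q : Pt S) : ℝ := ⨆ s, (- q.1 s)
/-- Upper endpoint of admissible shifts. -/
noncomputable def Uq (q : Pt S) : ℝ := ⨅ t, q.2 t
/-- The shift amount: projection of `0` onto `[Lq, Uq]`. -/
noncomputable def alph (q : Pt S) : ℝ := max (Lq q) (min 0 (Uq q))

noncomputable def psi (q : Pt S) : Pt S := shiftE (alph q) q

private lemma alph_lip (q1 q2 : Pt S) : alph q1 ≤ alph q2 + Dinf q1 q2 := by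
  set d := Dinf q1 q2 with hd
  have hd0 : 0 ≤ d := dinf_nonneg' q1 q2
  have hL : Lq q1 ≤ Lq q2 + d := by
    unfold Lq
    refine ciSup_le fun s => ?_
    have h1 := c_sub_le_dinf' q1 q2 s
    have h2 := le_csup' (fun s => - q2.1 s) s
    linarith
  have hU : Uq q1 ≤ Uq q2 + d := by
    have : Uq q1 - d ≤ Uq q2 := by
      unfold Uq
      refine le_ciInf fun t => ?_
      have h1 := r_sub_le_dinf' q1 q2 t
      have h2 : (⨅ t, q1.2 t) ≤ q1.2 t := cinf_le'' q1.2 t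
      linarith
    linarith
  have hmin : min 0 (Uq q1) ≤ min 0 (Uq q2) + d := by
    rcases le_total 0 (Uq q2) with h | h
    · have := min_le_left (0:ℝ) (Uq q1)
      rw [min_eq_left h]; linarith
    · have := min_le_right (0:ℝ) (Uq q1)
      rw [min_eq_right h]
      have := min_le_right (0:ℝ) (Uq q1); linarith
  exact max_le (hL.trans (add_le_add_left (le_max_left _ _) d))
    (hmin.trans (add_le_add_left (le_max_right _ _) d))

private lemma psi_step (q1 q2 : Pt S) :
    Dinf (psi q1) (psi q2) ≤ Dinf q1 q2 + (alph q2 - alph q1) := by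
  set d := Dinf q1 q2 with hd
  have hd0 : 0 ≤ d := dinf_nonneg' q1 q2
  have hδ : alph q1 - alph q2 ≤ d := by have := alph_lip q1 q2; linarith
  refine dinf_le' (by linarith) (fun s => ?_) (fun s => ?_)
  · have := c_sub_le_dinf' q1 q2 s
    simp only [psi, shiftE]; linarith
  · have := r_sub_le_dinf' q1 q2 s
    simp only [psi, shiftE]; linarith

private lemma phi0_nonexp (μ : S → S → ℝ) (p q : Pt S) :
    Dinf (phi0 μ p) (phi0 μ q) ≤ Dinf p q := by
  set d := Dinf p q with hd
  have hd0 : 0 ≤ d := dinf_nonneg' p q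
  have h1 : ∀ s, q.1 s ≤ p.1 s + d := fun s => by linarith [c_sub_le_dinf' p q s]
  have h2 : ∀ t, star1 μ p.1 t ≤ star1 μ q.1 t + d := star1_shift h1
  refine dinf_le' hd0 (fun s => ?_) (fun t => ?_)
  · have := star2_shift (μ := μ) h2 s
    simp only [phi0]; linarith
  · have := h2 t
    simp only [phi0]; linarith

end AuxStmt4

/-- Lemma 2.6.  There is a cyclically nonexpansive retraction `φ : T_μ → Q_μ^+`
which is the identity on `Q_μ^+`. -/
theorem stmt4 {S : Type*} [Fintype S] [Nonempty S] (μ : S → S → ℝ)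
    (hμ : DirDist μ) :
    ∃ φ : Pt S → Pt S,
      (∀ p ∈ TT μ, φ p ∈ QP μ) ∧
      (∀ p ∈ QP μ, φ p = p) ∧
      (∀ (m : ℕ) (x : Fin (m + 1) → Pt S), (∀ i, x i ∈ TT μ) →
        cycLen Dinf m (fun i => φ (x i)) ≤ cycLen Dinf m x) := by
  classical
  refine ⟨fun p => psi (phi0 μ p), ?_, ?_, ?_⟩
  · -- maps into Q_μ^+ (in fact for every p)
    intro p _
    have hq : phi0 μ p ∈ QQ μ := phi0_mem_QQ μ p
    constructor
    · show psi (phi0 μ p) ∈ QQ μ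
      unfold psi
      exact QQ_shift _ hq
    have hPi : ∀ s t, μ s t ≤ (phi0 μ p).1 s + (phi0 μ p).2 t := hq.1
    have hA : ∀ s, 0 ≤ (phi0 μ p).1 s + alph (phi0 μ p) := by
      intro s
      have h1 : -(phi0 μ p).1 s ≤ Lq (phi0 μ p) := by
        unfold Lq
        exact le_csup' (fun s => -(phi0 μ p).1 s) s
      have h2 : Lq (phi0 μ p) ≤ alph (phi0 μ p) := le_max_left _ _
      linarith
    have hB : ∀ t, 0 ≤ (phi0 μ p).2 t - alph (phi0 μ p) := by
      intro t
      have h2 : alph (phi0 μ p) ≤ (phi0 μ p).2 t := by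
        unfold alph Lq
        refine max_le (ciSup_le fun s => ?_) ?_
        · have := hPi s t
          have := hμ.1 s t
          linarith
        · exact (min_le_right _ _).trans (cinf_le'' (phi0 μ p).2 t)

      linarith
    show (0 : Pt S) ≤ psi (phi0 μ p)
    rw [Prod.le_def]
    constructor
    · intro s
      simpa [psi, shiftE] using hA s
    · intro t
      simpa [psi, shiftE, sub_nonneg] using hB t
  · -- identity on Q_μ^+
    intro p hp
    obtain ⟨hQ, hpos⟩ := hp
    have h0 : phi0 μ p = p := phi0_id hQ
    have hpos1 : ∀ s, 0 ≤ p.1 s := fun s => hpos.1 s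
    have hpos2 : ∀ t, 0 ≤ p.2 t := fun t => hpos.2 t
    have hL : Lq p ≤ 0 := by
      unfold Lq
      exact ciSup_le fun s => by linarith [hpos1 s]
    have hU : 0 ≤ Uq p := by
      unfold Uq
      exact le_ciInf fun t => hpos2 t
    have ha : alph p = 0 := by
      simp only [alph, min_eq_left hU, max_eq_right hL]
    simp only [h0, psi, ha, shiftE]
    exact Prod.ext (funext fun s => by ring) (funext fun t => by ring)
  · -- cyclically nonexpansive
    intro m x _
    simp only [cycLen]
    set a : Fin (m + 1) → ℝ := fun i => alph (phi0 μ (x i)) with ha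
    have step : ∀ i : Fin (m + 1),
        Dinf (psi (phi0 μ (x i))) (psi (phi0 μ (x (i + 1)))) ≤
          Dinf (x i) (x (i + 1)) + (a (i + 1) - a i) := by
      intro i
      have h1 := psi_step (phi0 μ (x i)) (phi0 μ (x (i + 1)))
      have h2 := phi0_nonexp μ (x i) (x (i + 1))
      simp only [ha]
      linarith
    calc (∑ i, Dinf (psi (phi0 μ (x i))) (psi (phi0 μ (x (i + 1)))))
        ≤ ∑ i, (Dinf (x i) (x (i + 1)) + (a (i + 1) - a i)) :=
          Finset.sum_le_sum fun i _ => step i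
      _ = (∑ i, Dinf (x i) (x (i + 1))) + ((∑ i, a (i + 1)) - ∑ i, a i) := by
          rw [Finset.sum_add_distrib, Finset.sum_sub_distrib]
      _ = ∑ i, Dinf (x i) (x (i + 1)) := by
          have : (∑ i, a (i + 1)) = ∑ i, a i :=
            Fintype.sum_equiv (Equiv.addRight (1 : Fin (m + 1))) (fun i => a (i + 1)) a
              (fun i => rfl)
          rw [this]; ring
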